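/- Let R be a (not necessarily commutative) ring, let 𝒮 be a saturated multiplicative class of left R-modules, let M be a left R-module of finite length, and let (A₁,A₂) and (B₁,B₂) be maximal elements of Dec_𝒮(M). Then (A₁,B₂) and (B₁,A₂) are also maximal elements of Dec_𝒮(M). -/

import Mathlib

/-- For submodules `C`, `D`, `N` of `M`, `C ⊕ D = N` internally: the natural map
`C ⊕ D → M` is injective with image `N`. -/
def InternalSum {R : Type u} [Ring R] {M : Type v} [AddCommGroup M] [Module R M]
    (C D N : Submodule R M) : Prop :=
  Function.Injective (C.subtype.coprod D.subtype) ∧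
    LinearMap.range (C.subtype.coprod D.subtype) = N

/-- The partial order on `Dec(M)`: `(D,N) ≤ (D',N')` iff there is a submodule `C` with
`D = D' ⊕ C` and `N ⊕ C = N'` (internally). -/
def DecLE {R : Type u} [Ring R] {M : Type v} [AddCommGroup M] [Module R M]
    (p q : Submodule R M × Submodule R M) : Prop :=
  ∃ C : Submodule R M, InternalSum q.1 C p.1 ∧ InternalSum p.2 C q.2

/-- Membership in `Dec_𝒮(M)`: `(M₁,M₂)` is a decomposition of `M` (the natural map
`M₁ ⊕ M₂ → M` is an isomorphism) with `M₂ ∈ 𝒮`. -/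
def DecSMem {R : Type u} [Ring R] {M : Type v} [AddCommGroup M] [Module R M]
    (S : (D : Type v) → [AddCommGroup D] → [Module R D] → Prop)
    (p : Submodule R M × Submodule R M) : Prop :=
  Function.Bijective (p.1.subtype.coprod p.2.subtype) ∧ S p.2

/-- `p` is a maximal element of the partially ordered set `Dec_𝒮(M)`. -/
def DecSMax {R : Type u} [Ring R] {M : Type v} [AddCommGroup M] [Module R M]
    (S : (D : Type v) → [AddCommGroup D] → [Module R D] → Prop)
    (p : Submodule R M × Submodule R M) : Prop :=
  DecSMem S p ∧ ∀ q, DecSMem S q → DecLE p q → q = p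

section Aux

variable {R : Type u} [Ring R] {M : Type v} [AddCommGroup M] [Module R M]

theorem coprod_injective_iff {C D : Submodule R M} :
    Function.Injective (C.subtype.coprod D.subtype) ↔ Disjoint C D := by
  constructor
  · intro hinj
    rw [disjoint_iff]
    ext x
    simp only [Submodule.mem_inf, Submodule.mem_bot]
    refine ⟨fun ⟨hxC, hxD⟩ => ?_, fun h => by simp [h]⟩
    have h0 : (C.subtype.coprod D.subtype) (⟨x, hxC⟩, -⟨x, hxD⟩) =
        (C.subtype.coprod D.subtype) 0 := by
      simp [LinearMap.coprod_apply]
    have h1 := hinj h0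
    have h2 : (⟨x, hxC⟩ : C) = 0 := by
      simpa using congrArg Prod.fst h1
    simpa using congrArg Subtype.val h2
  · intro hd a b hab
    simp only [LinearMap.coprod_apply] at hab
    have h1 : (a.1 : M) - (b.1 : M) = (b.2 : M) - (a.2 : M) := by
      rw [sub_eq_sub_iff_add_eq_add]
      simpa [add_comm] using hab
    have hmem : (a.1 : M) - (b.1 : M) ∈ C ⊓ D := by
      refine ⟨sub_mem a.1.2 b.1.2, ?_⟩
      rw [h1]; exact sub_mem b.2.2 a.2.2
    rw [disjoint_iff] at hd
    rw [hd, Submodule.mem_bot] at hmem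
    have h2 : (a.1 : M) = (b.1 : M) := sub_eq_zero.mp hmem
    have h3 : (a.2 : M) = (b.2 : M) := by
      have hz : (b.2 : M) - (a.2 : M) = 0 := h1 ▸ hmem
      exact (sub_eq_zero.mp hz).symm
    exact Prod.ext (Subtype.ext h2) (Subtype.ext h3)

theorem internalSum_iff {C D N : Submodule R M} :
    InternalSum C D N ↔ Disjoint C D ∧ C ⊔ D = N := by
  unfold InternalSum
  rw [coprod_injective_iff, LinearMap.range_coprod, Submodule.range_subtype,
    Submodule.range_subtype]

theorem coprod_bijective_iff {C D : Submodule R M} :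
    Function.Bijective (C.subtype.coprod D.subtype) ↔ IsCompl C D := by
  rw [Function.Bijective, coprod_injective_iff, ← LinearMap.range_eq_top,
    LinearMap.range_coprod, Submodule.range_subtype, Submodule.range_subtype,
    isCompl_iff, codisjoint_iff]

/-- The internal sup of disjoint submodules is isomorphic to their product. -/
noncomputable def supEquivProd {C D : Submodule R M} (h : Disjoint C D) :
    ↥(C ⊔ D) ≃ₗ[R] ↥C × ↥D :=
  ((LinearEquiv.ofInjective (C.subtype.coprod D.subtype)
      (coprod_injective_iff.mpr h)).trans
    (LinearEquiv.ofEq _ _ (by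
      rw [LinearMap.range_coprod, Submodule.range_subtype, Submodule.range_subtype]))).symm

end Aux

section SAux

variable {R : Type u} [Ring R] {M : Type v} [AddCommGroup M] [Module R M]
variable (S : (D : Type v) → [AddCommGroup D] → [Module R D] → Prop)

/-- A saturated class is closed under isomorphism. -/
theorem S_congr
    (hsat : ∀ (M' D : Type v) [AddCommGroup M'] [Module R M'] [AddCommGroup D] [Module R D],
      S M' → (∃ (N : Type v) (_ : AddCommGroup N) (_ : Module R N),
        Nonempty (M' ≃ₗ[R] D × N)) → S D)
    {X Y : Type v} [AddCommGroup X] [Module R X] [AddCommGroup Y] [Module R Y]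
    (e : X ≃ₗ[R] Y) (hX : S X) : S Y := by
  have e2 : Y ≃ₗ[R] Y × PUnit.{v+1} := LinearEquiv.ofLinear
    (LinearMap.prod (LinearMap.id : Y →ₗ[R] Y) (0 : Y →ₗ[R] PUnit.{v+1}))
    (LinearMap.fst R Y PUnit.{v+1}) (by ext x <;> simp) (by ext x; simp)
  exact hsat X Y hX ⟨PUnit, inferInstance, inferInstance, ⟨e.trans e2⟩⟩

/-- `P` has no nonzero internal direct summand belonging to `S`. -/
def NoS (P : Submodule R M) : Prop :=
  ∀ C D : Submodule R M, Disjoint D C → D ⊔ C = P → S ↥C → C = ⊥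

theorem noS_of_max
    (hmul : ∀ (M' N D : Type v) [AddCommGroup M'] [Module R M'] [AddCommGroup N] [Module R N]
      [AddCommGroup D] [Module R D], Nonempty (M' ≃ₗ[R] N × D) → S N → S D → S M')
    {P Q : Submodule R M} (hmax : DecSMax S (P, Q)) : NoS S P := by
  obtain ⟨⟨hbij, hSQ⟩, hmax⟩ := hmax
  have hPQ : IsCompl P Q := coprod_bijective_iff.mp hbij
  intro C D hDC hsupDC hSC
  have hCP : C ≤ P := hsupDC ▸ le_sup_right
  have hDP : D ≤ P := hsupDC ▸ le_sup_left
  have hQC : Disjoint Q C :=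
    Disjoint.mono_right hCP hPQ.disjoint.symm
  -- the new decomposition (D, Q ⊔ C) lies above (P, Q)
  have hDdisj : Disjoint D (Q ⊔ C) := by
    rw [disjoint_iff]
    have h1 : (C ⊔ Q) ⊓ P = C := by
      rw [sup_inf_assoc_of_le Q hCP, hPQ.symm.disjoint.eq_bot, sup_bot_eq]
    have h2 : D ⊓ (Q ⊔ C) = D ⊓ C := by
      conv_lhs => rw [← inf_eq_left.mpr hDP]
      rw [inf_assoc, inf_comm P (Q ⊔ C), sup_comm Q C, h1]
    rw [h2, hDC.eq_bot]
  have hDcodisj : Codisjoint D (Q ⊔ C) := by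
    rw [codisjoint_iff, sup_comm Q C, ← sup_assoc, hsupDC, hPQ.codisjoint.eq_top]
  have hSsum : S ↥(Q ⊔ C) :=
    hmul ↥(Q ⊔ C) ↥Q ↥C ⟨supEquivProd hQC⟩ hSQ hSC
  have hmem : DecSMem S (D, Q ⊔ C) :=
    ⟨coprod_bijective_iff.mpr ⟨hDdisj, hDcodisj⟩, hSsum⟩
  have hle : DecLE (P, Q) (D, Q ⊔ C) :=
    ⟨C, internalSum_iff.mpr ⟨hDC, hsupDC⟩, internalSum_iff.mpr ⟨hQC, rfl⟩⟩
  have heq := hmax (D, Q ⊔ C) hmem hle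
  have hQC' : Q ⊔ C = Q := congrArg Prod.snd heq
  have hCQ : C ≤ Q := hQC'.symm ▸ le_sup_right
  exact le_bot_iff.mp ((le_inf hCP hCQ).trans hPQ.disjoint.le_bot)

theorem max_of_noS
    (hsat : ∀ (M' D : Type v) [AddCommGroup M'] [Module R M'] [AddCommGroup D] [Module R D],
      S M' → (∃ (N : Type v) (_ : AddCommGroup N) (_ : Module R N),
        Nonempty (M' ≃ₗ[R] D × N)) → S D)
    {P Q : Submodule R M} (hPQ : IsCompl P Q) (hSQ : S ↥Q) (hnoS : NoS S P) :
    DecSMax S (P, Q) := by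
  refine ⟨⟨coprod_bijective_iff.mpr hPQ, hSQ⟩, ?_⟩
  rintro ⟨D, N⟩ ⟨hbij, hSN⟩ ⟨C, h1, h2⟩
  rw [internalSum_iff] at h1 h2
  obtain ⟨hd1, hs1⟩ := h1
  obtain ⟨hd2, hs2⟩ := h2
  have hSC : S ↥C := by
    refine hsat ↥N ↥C hSN ⟨↥Q, inferInstance, inferInstance,
      ⟨(LinearEquiv.ofEq _ _ hs2.symm).trans ((supEquivProd hd2).trans
        (LinearEquiv.prodComm R ↥Q ↥C))⟩⟩
  have hC : C = ⊥ := hnoS C D hd1 hs1 hSC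
  subst hC
  have hD : D = P := by simpa using hs1
  have hN : N = Q := by simpa using hs2.symm
  simp [hD, hN]

end SAux

section Core

variable {R : Type u} [Ring R] {M : Type v} [AddCommGroup M] [Module R M]
variable (S : (D : Type v) → [AddCommGroup D] → [Module R D] → Prop)

/-- The core exchange argument: if `M = A₁ ⊕ A₂ = B₁ ⊕ B₂`, `A₂ ∈ S`, and `B₁` has no
nonzero direct summand in `S`, then `B₁ ∩ A₂ = 0` and `A₁ + B₂ = M`. -/
theorem core_exchange
    (hlen : IsFiniteLength R M)
    (hsat : ∀ (M' D : Type v) [AddCommGroup M'] [Module R M'] [AddCommGroup D] [Module R D],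
      S M' → (∃ (N : Type v) (_ : AddCommGroup N) (_ : Module R N),
        Nonempty (M' ≃ₗ[R] D × N)) → S D)
    {A₁ A₂ B₁ B₂ : Submodule R M}
    (hA : IsCompl A₁ A₂) (hB : IsCompl B₁ B₂)
    (hSA₂ : S ↥A₂) (hnoB₁ : NoS S B₁) :
    Disjoint B₁ A₂ ∧ Codisjoint A₁ B₂ := by
  obtain ⟨hNoeth, hArt⟩ := isFiniteLength_iff_isNoetherian_isArtinian.mp hlen
  -- projections
  let ρ : M →ₗ[R] ↥A₁ := A₁.linearProjOfIsCompl A₂ hA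
  let e : M →ₗ[R] ↥A₂ := A₂.linearProjOfIsCompl A₁ hA.symm
  let π : M →ₗ[R] ↥B₁ := B₁.linearProjOfIsCompl B₂ hB
  let π₂ : M →ₗ[R] ↥B₂ := B₂.linearProjOfIsCompl B₁ hB.symm
  let θ : Module.End R ↥B₁ := (π.comp A₁.subtype).comp (ρ.comp B₁.subtype)
  have hθapp : ∀ x : ↥B₁, θ x = π ((ρ (x : M) : ↥A₁) : M) := fun _ => rfl
  have key : ∀ x : ↥B₁, x - θ x = π ((e (x : M) : ↥A₂) : M) := by
    intro x
    have hx : ((x : M)) - ((ρ (x : M) : ↥A₁) : M) = ((e (x : M) : ↥A₂) : M) :=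
      sub_eq_iff_eq_add'.mpr
        (Submodule.projection_add_projection_eq_self hA (x : M)).symm
    have hπx : π (x : M) = x := Submodule.linearProjOfIsCompl_apply_left hB x
    rw [hθapp, ← hx, map_sub, hπx]
  -- Fitting decomposition for θ
  obtain ⟨n, hn1, hKI⟩ : ∃ n, 1 ≤ n ∧
      IsCompl (LinearMap.ker (θ ^ n)) (LinearMap.range (θ ^ n)) := by
    obtain ⟨n, hn⟩ :=
      ((Filter.eventually_ge_atTop 1).and θ.eventually_isCompl_ker_pow_range_pow).exists
    exact ⟨n, hn.1, hn.2⟩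
  set K := LinearMap.ker (θ ^ n) with hKdef
  set I := LinearMap.range (θ ^ n) with hIdef
  -- geometric sum
  let g : Module.End R ↥B₁ := ∑ i ∈ Finset.range n, θ ^ i
  have hgeom : (1 - θ) * g = 1 - θ ^ n := mul_neg_geom_sum θ n
  -- the splitting maps exhibiting K as a direct summand of A₂ (up to iso)
  let u : ↥K →ₗ[R] ↥A₂ :=
    e.comp (B₁.subtype.comp ((g : ↥B₁ →ₗ[R] ↥B₁).comp K.subtype))
  let w : ↥B₁ →ₗ[R] ↥B₁ := LinearMap.id
  let w' : ↥A₂ →ₗ[R] ↥B₁ := π.comp A₂.subtype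
  let pK : ↥B₁ →ₗ[R] ↥K := K.linearProjOfIsCompl I hKI
  let v : ↥A₂ →ₗ[R] ↥K := pK.comp w'
  have hw'u : ∀ k : ↥K, w' (u k) = (k : ↥B₁) := by
    intro k
    have h1 : w' (u k) = π ((e ((g (k : ↥B₁) : ↥B₁) : M) : ↥A₂) : M) := rfl
    have hk0 : (θ ^ n) (k : ↥B₁) = 0 := LinearMap.mem_ker.mp k.2
    have h3 : ((1 - θ) * g) (k : ↥B₁) = ((1 : Module.End R ↥B₁) - θ ^ n) (k : ↥B₁) := by
      rw [hgeom]
    simp only [Module.End.mul_apply, LinearMap.sub_apply, Module.End.one_apply] at h3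
    rw [h1, ← key (g (k : ↥B₁)), h3, hk0, sub_zero]
  have hvu : ∀ k : ↥K, v (u k) = k := by
    intro k
    have h1 : v (u k) = pK (w' (u k)) := rfl
    rw [h1, hw'u k]
    exact Submodule.linearProjOfIsCompl_apply_left hKI k
  -- S ↥K
  let q : ↥A₂ →ₗ[R] ↥A₂ := LinearMap.id - u.comp v
  have hqapp : ∀ a : ↥A₂, q a = a - u (v a) := fun _ => rfl
  have hker : ∀ a : ↥A₂, q a ∈ LinearMap.ker v := by
    intro a
    simp only [LinearMap.mem_ker, hqapp, map_sub]
    rw [hvu, sub_self]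
  let Φ : ↥A₂ →ₗ[R] ↥K × ↥(LinearMap.ker v) :=
    LinearMap.prod v (LinearMap.codRestrict (LinearMap.ker v) q hker)
  let Ψ : ↥K × ↥(LinearMap.ker v) →ₗ[R] ↥A₂ := u.coprod (LinearMap.ker v).subtype
  have hΦΨ : Φ.comp Ψ = LinearMap.id := by
    apply LinearMap.ext
    rintro ⟨k, z⟩
    have hz : v (z : ↥A₂) = 0 := z.2
    have h1 : v (u k + (z : ↥A₂)) = k := by rw [map_add, hvu, hz, add_zero]
    apply Prod.ext
    · exact h1
    · apply Subtype.ext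
      show (u k + (z : ↥A₂)) - u (v (u k + (z : ↥A₂))) = (z : ↥A₂)
      rw [h1, add_sub_cancel_left]
  have hΨΦ : Ψ.comp Φ = LinearMap.id := by
    apply LinearMap.ext
    intro a
    show u (v a) + (a - u (v a)) = a
    abel
  have hSK : S ↥K := hsat ↥A₂ ↥K hSA₂
    ⟨↥(LinearMap.ker v), inferInstance, inferInstance, ⟨LinearEquiv.ofLinear Φ Ψ hΦΨ hΨΦ⟩⟩
  -- transfer to submodules of M and use that B₁ has no nonzero S-summand
  have hinj : Function.Injective B₁.subtype := B₁.injective_subtype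
  have hdisj : Disjoint (I.map B₁.subtype) (K.map B₁.subtype) := by
    rw [disjoint_iff, ← Submodule.map_inf _ hinj, hKI.disjoint.symm.eq_bot, Submodule.map_bot]
  have hsup : (I.map B₁.subtype) ⊔ (K.map B₁.subtype) = B₁ := by
    rw [← Submodule.map_sup, sup_comm, hKI.codisjoint.eq_top, Submodule.map_subtype_top]
  have hSK' : S ↥(K.map B₁.subtype) :=
    S_congr S hsat (Submodule.equivMapOfInjective B₁.subtype hinj K) hSK
  have hK' : K.map B₁.subtype = ⊥ := hnoB₁ (K.map B₁.subtype) (I.map B₁.subtype) hdisj hsup hSK'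
  have hK : K = ⊥ := by
    apply Submodule.map_injective_of_injective hinj
    rw [hK', Submodule.map_bot]
  -- θ is bijective
  obtain ⟨m, rfl⟩ : ∃ m, n = m + 1 := ⟨n - 1, by omega⟩
  have hinjθ : Function.Injective θ := by
    rw [← LinearMap.ker_eq_bot]
    rw [eq_bot_iff, ← hK]
    intro x hx
    have hx0 : θ x = 0 := hx
    show (θ ^ (m + 1)) x = 0
    rw [pow_succ, Module.End.mul_apply, hx0, map_zero]
  have hsurjθ : Function.Surjective θ := by
    have htop : I = ⊤ := by
      have h := hKI.codisjoint.eq_top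
      rwa [hK, bot_sup_eq] at h
    intro y
    have hy : y ∈ I := htop ▸ Submodule.mem_top
    obtain ⟨x, hx⟩ := hy
    exact ⟨(θ ^ m) x, by rw [← Module.End.mul_apply, ← pow_succ']; exact hx⟩
  constructor
  · rw [Submodule.disjoint_def]
    intro x hxB hxA
    have h0 : θ ⟨x, hxB⟩ = 0 := by
      have hρ : ρ x = 0 := Submodule.projectionOnto_apply_of_mem_right hA hxA
      have h1 : θ ⟨x, hxB⟩ = π ((ρ x : ↥A₁) : M) := hθapp ⟨x, hxB⟩
      rw [h1, hρ]
      simp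
    have h1 : (⟨x, hxB⟩ : ↥B₁) = 0 := by
      apply hinjθ
      rw [h0, map_zero]
    simpa using congrArg Subtype.val h1
  · rw [codisjoint_iff, eq_top_iff]
    have hB1le : B₁ ≤ A₁ ⊔ B₂ := by
      intro b hb
      obtain ⟨x, hx⟩ := hsurjθ ⟨b, hb⟩
      have haA : ((ρ (x : M) : ↥A₁) : M) ∈ A₁ := (ρ (x : M)).2
      have h2 := hθapp x
      rw [hx] at h2
      have hb' : b = ((π ((ρ (x : M) : ↥A₁) : M) : ↥B₁) : M) := congrArg Subtype.val h2
      have hdec : ((π ((ρ (x : M) : ↥A₁) : M) : ↥B₁) : M)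
          + ((π₂ ((ρ (x : M) : ↥A₁) : M) : ↥B₂) : M) = ((ρ (x : M) : ↥A₁) : M) :=
        Submodule.projection_add_projection_eq_self hB _
      refine Submodule.mem_sup.mpr ⟨_, haA, -((π₂ ((ρ (x : M) : ↥A₁) : M) : ↥B₂) : M),
        B₂.neg_mem (π₂ _).2, ?_⟩
      rw [hb', eq_sub_of_add_eq hdec]
      abel
    rw [← hB.codisjoint.eq_top]
    exact sup_le hB1le le_sup_right

end Core

theorem decS_max_swap
    {R : Type u} [Ring R] {M : Type v} [AddCommGroup M] [Module R M]
    (hlen : IsFiniteLength R M)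
    (S : (D : Type v) → [AddCommGroup D] → [Module R D] → Prop)
    (hzero : S PUnit)
    (hmul : ∀ (M' N D : Type v) [AddCommGroup M'] [Module R M'] [AddCommGroup N] [Module R N]
      [AddCommGroup D] [Module R D], Nonempty (M' ≃ₗ[R] N × D) → S N → S D → S M')
    (hsat : ∀ (M' D : Type v) [AddCommGroup M'] [Module R M'] [AddCommGroup D] [Module R D],
      S M' → (∃ (N : Type v) (_ : AddCommGroup N) (_ : Module R N),
        Nonempty (M' ≃ₗ[R] D × N)) → S D)
    (A₁ A₂ B₁ B₂ : Submodule R M)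
    (hA : DecSMax S (A₁, A₂)) (hB : DecSMax S (B₁, B₂)) :
    DecSMax S (A₁, B₂) ∧ DecSMax S (B₁, A₂) := by
  have hcA : IsCompl A₁ A₂ := coprod_bijective_iff.mp hA.1.1
  have hSA₂ : S ↥A₂ := hA.1.2
  have hcB : IsCompl B₁ B₂ := coprod_bijective_iff.mp hB.1.1
  have hSB₂ : S ↥B₂ := hB.1.2
  have hnoA₁ : NoS S A₁ := noS_of_max S hmul hA
  have hnoB₁ : NoS S B₁ := noS_of_max S hmul hB
  obtain ⟨hd1, hc1⟩ := core_exchange S hlen hsat hcA hcB hSA₂ hnoB₁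
  obtain ⟨hd2, hc2⟩ := core_exchange S hlen hsat hcB hcA hSB₂ hnoA₁
  exact ⟨max_of_noS S hsat ⟨hd2, hc1⟩ hSB₂ hnoA₁,
    max_of_noS S hsat ⟨hd1, hc2⟩ hSA₂ hnoB₁⟩
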